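/- Any finite set of points in the plane can be colored with 4 colors such that every closed half-plane containing at least 2 of the points contains two points of different colors. -/

import Mathlib

def halfPlane (a b c : ℝ) : Set (ℝ × ℝ) := {p | a * p.1 + b * p.2 ≤ c}

def GenPos (P : Finset (ℝ × ℝ)) : Prop :=
  ∀ p ∈ P, ∀ q ∈ P, ∀ r ∈ P, p ≠ q → p ≠ r → q ≠ r →
    ¬ Collinear ℝ ({p, q, r} : Set (ℝ × ℝ))

def vdot (u p : ℝ × ℝ) : ℝ := u.1 * p.1 + u.2 * p.2
def cross2 (x y : ℝ × ℝ) : ℝ := x.1 * y.2 - x.2 * y.1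

lemma collinear_of_cross (p q r : ℝ × ℝ)
    (h : cross2 (q - p) (r - p) = 0) : Collinear ℝ ({p, q, r} : Set (ℝ × ℝ)) := by
  rcases eq_or_ne q p with rfl | hqp
  · have he : ({q, q, r} : Set (ℝ×ℝ)) = {q, r} := by simp
    rw [he]; exact collinear_pair ℝ q r
  · rw [collinear_iff_of_mem (Set.mem_insert p {q,r})]
    refine ⟨q - p, fun x hx => ?_⟩
    simp only [Set.mem_insert_iff, Set.mem_singleton_iff] at hx
    rcases hx with rfl | rfl | rfl
    · exact ⟨0, by simp⟩
    · exact ⟨1, by simp⟩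
    · have hne : ¬(q.1 - p.1 = 0 ∧ q.2 - p.2 = 0) := by
        rintro ⟨h1, h2⟩
        exact hqp (Prod.ext (by linarith) (by linarith))
      simp only [cross2, Prod.fst_sub, Prod.snd_sub] at h
      rcases not_and_or.mp hne with h1 | h2
      · refine ⟨(x.1 - p.1)/(q.1 - p.1), ?_⟩
        apply Prod.ext
        · simp; field_simp; ring
        · simp; field_simp; nlinarith [h]
      · refine ⟨(x.2 - p.2)/(q.2 - p.2), ?_⟩
        apply Prod.ext
        · simp; field_simp; nlinarith [h]
        · simp; field_simp; ring

lemma vdot_nonzero {v : ℝ × ℝ} (h : v ≠ 0) : v.1 ≠ 0 ∨ v.2 ≠ 0 := by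
  by_contra hc
  push_neg at hc
  exact h (Prod.ext hc.1 hc.2)

lemma collinear_of_vdot {u p q r : ℝ × ℝ} (hu : u ≠ 0)
    (h1 : vdot u p = vdot u q) (h2 : vdot u p = vdot u r) :
    cross2 (q - p) (r - p) = 0 := by
  simp only [vdot] at h1 h2
  have h3 : u.1 ^ 2 + u.2 ^ 2 ≠ 0 := by
    rcases vdot_nonzero hu with h | h <;> positivity
  have key : (u.1 ^ 2 + u.2 ^ 2) * cross2 (q - p) (r - p) = 0 := by
    simp only [cross2, Prod.fst_sub, Prod.snd_sub]
    linear_combination (u.2 * (r.1 - p.1) - u.1 * (r.2 - p.2)) * h1 +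
      (u.1 * (q.2 - p.2) - u.2 * (q.1 - p.1)) * h2
  exact (mul_eq_zero.mp key).resolve_left h3

lemma exists_small (A : Finset (ℝ × ℝ)) (g d : (ℝ × ℝ) → ℝ) (hg : ∀ x ∈ A, 0 < g x) :
    ∃ t : ℝ, 0 < t ∧ t ≤ 1 ∧ ∀ x ∈ A, 0 < (1 - t) * g x + t * d x := by
  have h1 : ∀ᶠ t in nhdsWithin (0:ℝ) (Set.Ioi 0), ∀ x ∈ A, 0 < (1 - t) * g x + t * d x := by
    rw [Filter.eventually_all_finset]
    intro x hx
    have hc : Continuous (fun t : ℝ => (1 - t) * g x + t * d x) := by continuity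
    have ht : Filter.Tendsto (fun t : ℝ => (1 - t) * g x + t * d x) (nhds 0) (nhds (g x)) := by
      have := hc.tendsto 0
      simpa using this
    exact (ht.eventually (eventually_gt_nhds (hg x hx))).filter_mono nhdsWithin_le_nhds
  have h2 : ∀ᶠ t in nhdsWithin (0:ℝ) (Set.Ioi 0), t ≤ 1 := by
    have : ∀ᶠ t in nhds (0:ℝ), t < 1 := eventually_lt_nhds (by norm_num)
    exact (this.mono fun t ht => ht.le).filter_mono nhdsWithin_le_nhds
  have h3 : ∀ᶠ t in nhdsWithin (0:ℝ) (Set.Ioi 0), 0 < t := by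
    filter_upwards [self_mem_nhdsWithin] with t ht
    exact ht
  obtain ⟨t, ⟨ht0, ht1⟩, ht2⟩ := ((h3.and h2).and h1).exists
  exact ⟨t, ht0, ht1, ht2⟩

def HullEdge (P : Finset (ℝ × ℝ)) (p q : ℝ × ℝ) : Prop :=
  p ∈ P ∧ q ∈ P ∧ p ≠ q ∧ ∃ v : ℝ × ℝ, v ≠ 0 ∧ vdot v p = vdot v q ∧
    ∀ r ∈ P, r ≠ p → r ≠ q → vdot v p < vdot v r

def HullVtx (P : Finset (ℝ × ℝ)) (p : ℝ × ℝ) : Prop :=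
  p ∈ P ∧ ∃ w : ℝ × ℝ, w ≠ 0 ∧ ∀ r ∈ P, r ≠ p → vdot w p < vdot w r

lemma hullEdge_symm {P : Finset (ℝ × ℝ)} {p q : ℝ × ℝ} (h : HullEdge P p q) :
    HullEdge P q p := by
  obtain ⟨hp, hq, hpq, v, hv, heq, hs⟩ := h
  exact ⟨hq, hp, hpq.symm, v, hv, heq.symm, fun r hr h1 h2 => heq ▸ hs r hr h2 h1⟩

lemma vdot_smul_comb (t : ℝ) (v w x : ℝ × ℝ) :
    vdot ((1 - t) * v.1 + t * w.1, (1 - t) * v.2 + t * w.2) x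
      = (1 - t) * vdot v x + t * vdot w x := by
  simp only [vdot]; ring

lemma hullVtx_of_hullEdge {P : Finset (ℝ × ℝ)} {p q : ℝ × ℝ} (h : HullEdge P p q) :
    HullVtx P p := by
  classical
  obtain ⟨hp, hq, hpq, v, hv, heq, hs⟩ := h
  set w : ℝ × ℝ := q - p with hw
  set A : Finset (ℝ × ℝ) := (P.erase p).erase q with hA
  obtain ⟨t, ht0, ht1, ht⟩ := exists_small A (fun r => vdot v r - vdot v p)
    (fun r => vdot w r - vdot w p) (by
      intro x hx
      simp only [hA, Finset.mem_erase] at hx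
      have := hs x hx.2.2 hx.2.1 hx.1
      linarith)
  refine ⟨hp, ((1 - t) * v.1 + t * w.1, (1 - t) * v.2 + t * w.2), ?_, ?_⟩
  case refine_2 =>
    intro r hr hrp
    rw [vdot_smul_comb, vdot_smul_comb]
    rcases eq_or_ne r q with rfl | hrq
    · have hwpos : 0 < vdot w r - vdot w p := by
        have h1 : vdot w r - vdot w p = (r.1 - p.1) ^ 2 + (r.2 - p.2) ^ 2 := by
          simp only [vdot, hw, Prod.fst_sub, Prod.snd_sub]; ring
        have h2 : r - p ≠ 0 := sub_ne_zero.mpr hpq.symm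
        rcases vdot_nonzero h2 with h3 | h3 <;>
          simp only [Prod.fst_sub, Prod.snd_sub] at h3 <;> rw [h1] <;> positivity
      nlinarith [heq]
    · have := ht r (by simp [hA, Finset.mem_erase, hrq, hrp, hr])
      nlinarith
  case refine_1 =>
    intro h0
    have h1 := hs  -- dummy
    have hq' : vdot ((1 - t) * v.1 + t * w.1, (1 - t) * v.2 + t * w.2) p
        < vdot ((1 - t) * v.1 + t * w.1, (1 - t) * v.2 + t * w.2) q := by
      rw [vdot_smul_comb, vdot_smul_comb]
      have hwpos : 0 < vdot w q - vdot w p := by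
        have h1 : vdot w q - vdot w p = (q.1 - p.1) ^ 2 + (q.2 - p.2) ^ 2 := by
          simp only [vdot, hw, Prod.fst_sub, Prod.snd_sub]; ring
        have h2 : q - p ≠ 0 := sub_ne_zero.mpr hpq.symm
        rcases vdot_nonzero h2 with h3 | h3 <;>
          simp only [Prod.fst_sub, Prod.snd_sub] at h3 <;> rw [h1] <;> positivity
      nlinarith [heq]
    rw [h0] at hq'
    simp [vdot] at hq'

lemma ivt_edge {P : Finset (ℝ × ℝ)} {p q : ℝ × ℝ} {u : ℝ × ℝ}
    (hp : p ∈ P) (hq : q ∈ P) (hpq : p ≠ q)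
    (hpmin : ∀ r ∈ P, vdot u p ≤ vdot u r)
    (hqmin : ∀ r ∈ P, r ≠ p → vdot u q ≤ vdot u r)
    (hlt : vdot u p < vdot u q)
    (hqvtx : HullVtx P q)
    (hex : ∃ r ∈ P, r ≠ p ∧ r ≠ q) :
    HullEdge P p q := by
  obtain ⟨-, w, hw, hws⟩ := hqvtx
  set g : ℝ → ℝ := fun t => (1 - t) * (vdot u q - vdot u p) + t * (vdot w q - vdot w p)
    with hgdef
  have hg0 : 0 < g 0 := by simp [hgdef]; linarith
  have hg1 : g 1 < 0 := by
    have := hws p hp hpq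
    simp [hgdef]; linarith
  have hcont : ContinuousOn g (Set.Icc 0 1) := by
    apply Continuous.continuousOn; continuity
  have h0mem : (0:ℝ) ∈ Set.Icc (g 1) (g 0) := ⟨hg1.le, hg0.le⟩
  obtain ⟨t, htmem, hgt⟩ := intermediate_value_Icc' (by norm_num : (0:ℝ) ≤ 1) hcont h0mem
  have ht0 : 0 < t := by
    rcases lt_or_eq_of_le htmem.1 with h | h
    · exact h
    · exfalso; rw [← h] at hgt; rw [hgt] at hg0; exact lt_irrefl 0 hg0
  have ht1 : t ≤ 1 := htmem.2
  set v : ℝ × ℝ := ((1 - t) * u.1 + t * w.1, (1 - t) * u.2 + t * w.2) with hv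
  have heq : vdot v p = vdot v q := by
    rw [vdot_smul_comb, vdot_smul_comb]
    have : g t = 0 := hgt
    simp only [hgdef] at this
    linarith
  have hstrict : ∀ r ∈ P, r ≠ p → r ≠ q → vdot v p < vdot v r := by
    intro r hr hrp hrq
    rw [heq]
    rw [vdot_smul_comb, vdot_smul_comb]
    have h1 := hqmin r hr hrp
    have h2 := hws r hr hrq
    nlinarith
  have hvne : v ≠ 0 := by
    intro h0
    obtain ⟨r, hr, hrp, hrq⟩ := hex
    have := hstrict r hr hrp hrq
    rw [h0] at this
    simp [vdot] at this
  exact ⟨hp, hq, hpq, v, hvne, heq, hstrict⟩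

lemma samesign {v d x y : ℝ × ℝ} (hvd : vdot v d = 0) (hx : 0 < vdot v x)
    (hy : 0 < vdot v y) (hdx : cross2 d x ≠ 0) : 0 < cross2 d x * cross2 d y := by
  have key : vdot v x * cross2 d y = vdot v y * cross2 d x := by
    simp only [vdot, cross2] at *
    linear_combination (x.1 * y.2 - x.2 * y.1) * hvd
  have h6 : 0 < cross2 d x ^ 2 :=
    lt_of_le_of_ne (sq_nonneg _) (Ne.symm (pow_ne_zero 2 hdx))
  have h7 : vdot v x * (cross2 d x * cross2 d y) = vdot v y * cross2 d x ^ 2 := by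
    linear_combination cross2 d x * key
  have h5 : 0 < vdot v x * (cross2 d x * cross2 d y) := by
    rw [h7]; exact mul_pos hy h6
  nlinarith


lemma cross_ne_of_genpos {P : Finset (ℝ × ℝ)} (hP : GenPos P) {p q r : ℝ × ℝ}
    (hp : p ∈ P) (hq : q ∈ P) (hr : r ∈ P) (hpq : p ≠ q) (hpr : p ≠ r) (hqr : q ≠ r) :
    cross2 (q - p) (r - p) ≠ 0 :=
  fun h => hP p hp q hq r hr hpq hpr hqr (collinear_of_cross p q r h)

lemma vdot_sub (v x y : ℝ × ℝ) : vdot v (x - y) = vdot v x - vdot v y := by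
  simp [vdot]; ring

lemma deg_le_two {P : Finset (ℝ × ℝ)} (hP : GenPos P) {p q1 q2 q3 : ℝ × ℝ}
    (h1 : HullEdge P p q1) (h2 : HullEdge P p q2) (h3 : HullEdge P p q3)
    (h12 : q1 ≠ q2) (h13 : q1 ≠ q3) (h23 : q2 ≠ q3) : False := by
  obtain ⟨hp, hq1, hpq1, v1, hv1, heq1, hs1⟩ := h1
  obtain ⟨-, hq2, hpq2, v2, hv2, heq2, hs2⟩ := h2
  obtain ⟨-, hq3, hpq3, v3, hv3, heq3, hs3⟩ := h3
  have ortho : ∀ (v : ℝ × ℝ) (q : ℝ × ℝ), vdot v p = vdot v q → vdot v (q - p) = 0 := by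
    intro v q h; rw [vdot_sub]; linarith
  have pos12 : 0 < vdot v1 (q2 - p) := by
    have := hs1 q2 hq2 (Ne.symm hpq2) h12.symm; rw [vdot_sub]; linarith
  have pos13 : 0 < vdot v1 (q3 - p) := by
    have := hs1 q3 hq3 (Ne.symm hpq3) h13.symm; rw [vdot_sub]; linarith
  have pos21 : 0 < vdot v2 (q1 - p) := by
    have := hs2 q1 hq1 (Ne.symm hpq1) h12; rw [vdot_sub]; linarith
  have pos23 : 0 < vdot v2 (q3 - p) := by
    have := hs2 q3 hq3 (Ne.symm hpq3) h23.symm; rw [vdot_sub]; linarith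
  have pos31 : 0 < vdot v3 (q1 - p) := by
    have := hs3 q1 hq1 (Ne.symm hpq1) h13; rw [vdot_sub]; linarith
  have pos32 : 0 < vdot v3 (q2 - p) := by
    have := hs3 q2 hq2 (Ne.symm hpq2) h23; rw [vdot_sub]; linarith
  have c12 := cross_ne_of_genpos hP hp hq1 hq2 hpq1 hpq2 h12
  have c13 := cross_ne_of_genpos hP hp hq1 hq3 hpq1 hpq3 h13
  have c23 := cross_ne_of_genpos hP hp hq2 hq3 hpq2 hpq3 h23
  have ss1 := samesign (ortho v1 q1 heq1) pos12 pos13 c12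
  have ss2 := samesign (ortho v2 q2 heq2) pos21 pos23 (by
    intro h; apply c12; simp only [cross2] at *; linarith)
  have ss3 := samesign (ortho v3 q3 heq3) pos31 pos32 (by
    intro h; apply c13; simp only [cross2] at *; linarith)
  have anti : ∀ x y : ℝ × ℝ, cross2 x y = -cross2 y x := by
    intro x y; simp [cross2]; ring
  rw [anti (q2 - p) (q1 - p)] at ss2
  rw [anti (q3 - p) (q1 - p), anti (q3 - p) (q2 - p)] at ss3
  set a := cross2 (q1 - p) (q2 - p)
  set b := cross2 (q1 - p) (q3 - p)
  set c := cross2 (q2 - p) (q3 - p)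
  nlinarith [mul_pos ss1 ss3, sq_nonneg b, sq_nonneg a, sq_nonneg c, mul_pos ss1 ss2, mul_pos ss2 ss3]

lemma three_color (E : (ℝ × ℝ) → (ℝ × ℝ) → Prop)
    (hsym : ∀ {x y}, E x y → E y x) (hirr : ∀ x, ¬ E x x)
    (P : Finset (ℝ × ℝ))
    (hdeg : ∀ p q1 q2 q3, E p q1 → E p q2 → E p q3 →
      q1 ≠ q2 → q1 ≠ q3 → q2 ≠ q3 → False) :
    ∃ g : (ℝ × ℝ) → Fin 3, ∀ p ∈ P, ∀ q ∈ P, E p q → g p ≠ g q := by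
  classical
  induction P using Finset.induction_on with
  | empty => exact ⟨fun _ => 0, by simp⟩
  | @insert a s ha ih =>
    obtain ⟨g, hg⟩ := ih
    set N : Finset (ℝ × ℝ) := s.filter (fun x => E a x) with hN
    have hNcard : N.card ≤ 2 := by
      by_contra h
      push_neg at h
      obtain ⟨x, y, z, hx, hy, hz, hxy, hxz, hyz⟩ := Finset.two_lt_card_iff.mp h
      simp only [hN, Finset.mem_filter] at hx hy hz
      exact hdeg a x y z hx.2 hy.2 hz.2 hxy hxz hyz
    obtain ⟨c, hc⟩ : ∃ c : Fin 3, c ∉ N.image g := by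
      by_contra h
      push_neg at h
      have hsub : (Finset.univ : Finset (Fin 3)) ⊆ N.image g := fun c _ => h c
      have := (Finset.card_le_card hsub).trans (Finset.card_image_le.trans hNcard)
      simp at this
    refine ⟨Function.update g a c, ?_⟩
    intro p hp q hq hE
    rcases Finset.mem_insert.mp hp with rfl | hp' <;>
      rcases Finset.mem_insert.mp hq with rfl | hq'
    · exact absurd hE (hirr _)
    · rw [Function.update_self, Function.update_of_ne (ne_of_mem_of_not_mem hq' ha)]
      intro hcontra
      exact hc (hcontra ▸ Finset.mem_image_of_mem g (Finset.mem_filter.mpr ⟨hq', hE⟩))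
    · rw [Function.update_self, Function.update_of_ne (ne_of_mem_of_not_mem hp' ha)]
      intro hcontra
      exact hc (hcontra ▸ Finset.mem_image_of_mem g (Finset.mem_filter.mpr ⟨hp', hsym hE⟩))
    · rw [Function.update_of_ne (ne_of_mem_of_not_mem hp' ha),
        Function.update_of_ne (ne_of_mem_of_not_mem hq' ha)]
      exact hg p hp' q hq' hE

lemma min2_key {P : Finset (ℝ × ℝ)} (hP : GenPos P) (hcard : 5 ≤ P.card)
    {u : ℝ × ℝ} (hu : u ≠ 0) {p q : ℝ × ℝ} (hp : p ∈ P) (hq : q ∈ P) (hpq : p ≠ q)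
    (hpmin : ∀ r ∈ P, vdot u p ≤ vdot u r)
    (hqmin : ∀ r ∈ P, r ≠ p → vdot u q ≤ vdot u r) :
    HullEdge P p q ∨ (HullVtx P p ∧ ¬ HullVtx P q) := by
  classical
  rcases eq_or_lt_of_le (hpmin q hq) with heq | hlt
  · -- tie: hull edge directly
    left
    refine ⟨hp, hq, hpq, u, hu, heq, ?_⟩
    intro r hr hrp hrq
    rcases eq_or_lt_of_le (hpmin r hr) with heq2 | h
    · exfalso
      exact cross_ne_of_genpos hP hp hq hr hpq (fun h => hrp h.symm) (fun h => hrq h.symm)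
        (collinear_of_vdot hu heq heq2)
    · exact h
  · by_cases hqvtx : HullVtx P q
    · left
      apply ivt_edge hp hq hpq hpmin hqmin hlt hqvtx
      have h1 : 0 < ((P.erase p).erase q).card := by
        rw [Finset.card_erase_of_mem (Finset.mem_erase.mpr ⟨Ne.symm hpq, hq⟩),
          Finset.card_erase_of_mem hp]
        omega
      obtain ⟨r, hr⟩ := Finset.card_pos.mp h1
      simp only [Finset.mem_erase] at hr
      exact ⟨r, hr.2.2, hr.2.1, hr.1⟩
    · right
      refine ⟨?_, hqvtx⟩
      by_cases htie : ∃ r ∈ P, r ≠ p ∧ vdot u r = vdot u p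
      · obtain ⟨r₀, hr₀, hr₀p, hr₀eq⟩ := htie
        apply hullVtx_of_hullEdge (P := P) (q := r₀)
        refine ⟨hp, hr₀, fun h => hr₀p h.symm, u, hu, hr₀eq.symm, ?_⟩
        intro s hs hsp hsr
        rcases eq_or_lt_of_le (hpmin s hs) with heq2 | h
        · exfalso
          exact cross_ne_of_genpos hP hp hr₀ hs (fun h => hr₀p h.symm)
            (fun h => hsp h.symm) (fun h => hsr h.symm)
            (collinear_of_vdot hu hr₀eq.symm heq2)
        · exact h
      · push_neg at htie
        refine ⟨hp, u, hu, ?_⟩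
        intro r hr hrp
        exact lt_of_le_of_ne (hpmin r hr) (fun h => htie r hr hrp h.symm)


theorem stmt7 (P : Finset (ℝ × ℝ)) (hP : GenPos P) :
    ∃ f : ℝ × ℝ → Fin 4, ∀ a b c : ℝ, (a, b) ≠ ((0 : ℝ), (0 : ℝ)) →
      2 ≤ (halfPlane a b c ∩ ↑P).ncard →
      ∃ p ∈ P, ∃ q ∈ P, p ∈ halfPlane a b c ∧ q ∈ halfPlane a b c ∧ f p ≠ f q := by
  classical
  have hfin : ∀ a b c : ℝ, (halfPlane a b c ∩ ↑P).Finite :=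
    fun a b c => Set.Finite.inter_of_right P.finite_toSet _
  have hpair : ∀ a b c : ℝ, 2 ≤ (halfPlane a b c ∩ ↑P).ncard →
      ∃ s₁ s₂ : ℝ × ℝ, s₁ ∈ halfPlane a b c ∧ s₁ ∈ P ∧ s₂ ∈ halfPlane a b c ∧ s₂ ∈ P ∧ s₁ ≠ s₂ := by
    intro a b c h
    obtain ⟨s₁, s₂, h1, h2, h12⟩ := (Set.one_lt_ncard_iff (hfin a b c)).mp (by omega)
    exact ⟨s₁, s₂, h1.1, h1.2, h2.1, h2.2, h12⟩
  by_cases hbig : 5 ≤ P.card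
  · -- large case
    obtain ⟨g, hg⟩ := three_color (HullEdge P)
      (fun h => hullEdge_symm h) (fun x hx => hx.2.2.1 rfl) P
      (fun p q1 q2 q3 h1 h2 h3 => deg_le_two hP h1 h2 h3)
    refine ⟨fun x => if HullVtx P x then Fin.castSucc (g x) else 3, ?_⟩
    intro a b c hne h2
    set u : ℝ × ℝ := (a, b) with hu'
    have hu : u ≠ 0 := hne
    obtain ⟨s₁, s₂, hs₁H, hs₁P, hs₂H, hs₂P, hs12⟩ := hpair a b c h2
    obtain ⟨p, hp, hpmin⟩ := P.exists_min_image (vdot u) ⟨s₁, hs₁P⟩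
    have herase : (P.erase p).Nonempty := by
      rw [← Finset.card_pos, Finset.card_erase_of_mem hp]; omega
    obtain ⟨q, hq', hqmin'⟩ := (P.erase p).exists_min_image (vdot u) herase
    obtain ⟨hqp, hq⟩ := Finset.mem_erase.mp hq'
    have hqmin : ∀ r ∈ P, r ≠ p → vdot u q ≤ vdot u r :=
      fun r hr hrp => hqmin' r (Finset.mem_erase.mpr ⟨hrp, hr⟩)
    have hval : ∀ x : ℝ × ℝ, x ∈ halfPlane a b c ↔ vdot u x ≤ c := fun x => Iff.rfl
    have hpH : p ∈ halfPlane a b c := (hval p).mpr ((hpmin s₁ hs₁P).trans ((hval s₁).mp hs₁H))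
    have hqH : q ∈ halfPlane a b c := by
      rcases eq_or_ne s₁ p with rfl | hs₁p
      · exact (hval q).mpr ((hqmin s₂ hs₂P (by rintro rfl; exact hs12 rfl)).trans ((hval s₂).mp hs₂H))
      · exact (hval q).mpr ((hqmin s₁ hs₁P hs₁p).trans ((hval s₁).mp hs₁H))
    refine ⟨p, hp, q, hq, hpH, hqH, ?_⟩
    have hcast3 : ∀ x : Fin 3, Fin.castSucc x ≠ (3 : Fin 4) := by decide
    rcases min2_key hP hbig hu hp hq (Ne.symm hqp) hpmin hqmin with hedge | ⟨hvp, hnq⟩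
    · have hvp := hullVtx_of_hullEdge hedge
      have hvq := hullVtx_of_hullEdge (hullEdge_symm hedge)
      simp only [if_pos hvp, if_pos hvq]
      have := hg p hp q hq hedge
      simpa [Fin.castSucc_inj] using this
    · simp only [if_pos hvp, if_neg hnq]
      exact hcast3 (g p)
  · -- small case
    push_neg at hbig
    have hle : P.card ≤ 4 := by omega
    refine ⟨fun x => if h : x ∈ P then Fin.castLE hle (P.equivFin ⟨x, h⟩) else 0, ?_⟩
    intro a b c hne h2
    obtain ⟨s₁, s₂, hs₁H, hs₁P, hs₂H, hs₂P, hs12⟩ := hpair a b c h2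
    refine ⟨s₁, hs₁P, s₂, hs₂P, hs₁H, hs₂H, ?_⟩
    intro h
    simp only at h
    rw [dif_pos hs₁P, dif_pos hs₂P] at h
    have h3 := Fin.castLE_injective hle h
    have h4 := P.equivFin.injective h3
    exact hs12 (congrArg Subtype.val h4)
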